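/- Let I ⊆ ℝ be an open interval and φ : I → ℝ three times differentiable with φ ≠ 0 on I. Set Φ := φ² − φ·φ'' + 2·φ'² and assume Φ ≠ 0 on I. Let W : I → ℝ be differentiable with W > 0 on I and W' = 2·φ'/(φ·Φ) + 8·φ'³/(φ³·Φ) + 8·φ'⁵/(φ⁵·Φ) − 4·φ'·φ''/(φ²·Φ) + 2·φ'·φ''²/(φ³·Φ) − 8·φ'³·φ''/(φ⁴·Φ). Define κ := Φ/(φ³·√W). Then κ is differentiable and satisfies on I the equation (φ² − φ·φ'' + 2·φ'²)·φ·κ' + (κ²·φ²·φ' + φ²·φ' + φ²·φ''' − 6·φ·φ'·φ'' + 6·φ'³)·κ = 0. -/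

import Mathlib

/-- The function `κ = Φ/(φ³·√W)`, with `Φ = φ² − φ·φ'' + 2·φ'²` and `W` a
primitive of the stated combination of derivatives of `φ`, is differentiable and solves the
planarity ODE `(φ² − φ·φ'' + 2·φ'²)·φ·κ' + (κ²·φ²·φ' + φ²·φ' + φ²·φ''' − 6·φ·φ'·φ''
+ 6·φ'³)·κ = 0`. -/
theorem cone_ode_solution
    (I : Set ℝ) (hI : IsOpen I) (hI' : I.OrdConnected)
    (φ W : ℝ → ℝ)
    (hφ : ∀ x ∈ I, DifferentiableAt ℝ φ x)
    (hφ' : ∀ x ∈ I, DifferentiableAt ℝ (deriv φ) x)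
    (hφ'' : ∀ x ∈ I, DifferentiableAt ℝ (deriv (deriv φ)) x)
    (hφ0 : ∀ x ∈ I, φ x ≠ 0)
    (Φ : ℝ → ℝ)
    (hΦ : Φ = fun x => φ x ^ 2 - φ x * deriv (deriv φ) x + 2 * (deriv φ x) ^ 2)
    (hΦ0 : ∀ x ∈ I, Φ x ≠ 0)
    (hW : ∀ x ∈ I, DifferentiableAt ℝ W x)
    (hWpos : ∀ x ∈ I, 0 < W x)
    (hW' : ∀ x ∈ I, deriv W x =
      2 * deriv φ x / (φ x * Φ x) + 8 * (deriv φ x) ^ 3 / ((φ x) ^ 3 * Φ x) +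
        8 * (deriv φ x) ^ 5 / ((φ x) ^ 5 * Φ x) -
        4 * (deriv φ x * deriv (deriv φ) x) / ((φ x) ^ 2 * Φ x) +
        2 * (deriv φ x * (deriv (deriv φ) x) ^ 2) / ((φ x) ^ 3 * Φ x) -
        8 * ((deriv φ x) ^ 3 * deriv (deriv φ) x) / ((φ x) ^ 4 * Φ x))
    (κ : ℝ → ℝ) (hκ : κ = fun x => Φ x / ((φ x) ^ 3 * Real.sqrt (W x))) :
    ∀ x ∈ I, DifferentiableAt ℝ κ x ∧
      (φ x ^ 2 - φ x * deriv (deriv φ) x + 2 * (deriv φ x) ^ 2) * φ x * deriv κ x +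
        ((κ x) ^ 2 * (φ x) ^ 2 * deriv φ x + (φ x) ^ 2 * deriv φ x +
          (φ x) ^ 2 * deriv (deriv (deriv φ)) x - 6 * φ x * deriv φ x * deriv (deriv φ) x +
          6 * (deriv φ x) ^ 3) * κ x = 0 := by
  intro x hx
  have ha0 : φ x ≠ 0 := hφ0 x hx
  have hΦ0x : Φ x ≠ 0 := hΦ0 x hx
  have hw : 0 < W x := hWpos x hx
  have hs0 : (0:ℝ) < Real.sqrt (W x) := Real.sqrt_pos.mpr hw
  have hda : HasDerivAt φ (deriv φ x) x := (hφ x hx).hasDerivAt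
  have hdb : HasDerivAt (deriv φ) (deriv (deriv φ) x) x := (hφ' x hx).hasDerivAt
  have hdc : HasDerivAt (deriv (deriv φ)) (deriv (deriv (deriv φ)) x) x :=
    (hφ'' x hx).hasDerivAt
  have hΦx : Φ x = φ x ^ 2 - φ x * deriv (deriv φ) x + 2 * (deriv φ x) ^ 2 := by rw [hΦ]
  have hΦd : HasDerivAt Φ
      (2 * φ x * deriv φ x + 3 * deriv φ x * deriv (deriv φ) x -
        φ x * deriv (deriv (deriv φ)) x) x := by
    rw [hΦ]
    have h := ((hda.pow 2).sub (hda.mul hdc)).add ((hdb.pow 2).const_mul 2)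
    refine h.congr_deriv ?_
    ring
  have hWd : HasDerivAt W (deriv W x) x := (hW x hx).hasDerivAt
  have hsd : HasDerivAt (fun y => Real.sqrt (W y))
      (deriv W x / (2 * Real.sqrt (W x))) x := by
    have h := (Real.hasDerivAt_sqrt hw.ne').comp x hWd
    refine h.congr_deriv ?_
    ring
  have hg : HasDerivAt (fun y => (φ y) ^ 3 * Real.sqrt (W y))
      (3 * φ x ^ 2 * deriv φ x * Real.sqrt (W x) +
        φ x ^ 3 * (deriv W x / (2 * Real.sqrt (W x)))) x := by
    have h := (hda.pow 3).mul hsd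
    refine h.congr_deriv ?_
    simp only [Pi.pow_apply]
    ring
  have hg0 : (φ x) ^ 3 * Real.sqrt (W x) ≠ 0 :=
    mul_ne_zero (pow_ne_zero _ ha0) hs0.ne'
  have hκd : HasDerivAt κ
      ((( 2 * φ x * deriv φ x + 3 * deriv φ x * deriv (deriv φ) x -
          φ x * deriv (deriv (deriv φ)) x) * ((φ x) ^ 3 * Real.sqrt (W x)) -
        Φ x * (3 * φ x ^ 2 * deriv φ x * Real.sqrt (W x) +
          φ x ^ 3 * (deriv W x / (2 * Real.sqrt (W x))))) /
        ((φ x) ^ 3 * Real.sqrt (W x)) ^ 2) x := by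
    rw [hκ]
    exact hΦd.div hg hg0
  refine ⟨hκd.differentiableAt, ?_⟩
  have hw' : deriv W x = 2 * deriv φ x * Φ x / (φ x) ^ 5 := by
    rw [hW' x hx]
    have h2 : φ x ^ 2 - φ x * deriv (deriv φ) x + 2 * deriv φ x ^ 2 ≠ 0 := by
      rw [← hΦx]; exact hΦ0x
    have h3 : deriv φ x ^ 2 * 2 - φ x * deriv (deriv φ) x + φ x ^ 2 ≠ 0 := by
      intro h; apply h2; linarith
    field_simp
    rw [hΦx]
    ring
  have hκx : κ x = Φ x / ((φ x) ^ 3 * Real.sqrt (W x)) := by rw [hκ]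
  rw [hκd.deriv, hκx, hw', hΦx]
  have hs2 : Real.sqrt (W x) * Real.sqrt (W x) = W x := Real.mul_self_sqrt hw.le
  field_simp
  ring_nf
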